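/- Let $U \subseteq \mathbb{F}_q(X)^b$ be an $\mathbb{F}_q(X)$-linear subspace of dimension $D_U$ that is spanned (over $\mathbb{F}_q(X)$) by vectors whose entries are polynomials in $\mathbb{F}_q[X]$ of degree at most $k$. Then there exists a matrix $Z \in \mathbb{F}_q(X)^{(b - D_U) \times b}$ with $\ker Z = U$ (viewing $Z$ as a linear map $\mathbb{F}_q(X)^b \to \mathbb{F}_q(X)^{b - D_U}$) such that every entry of $Z$ is a polynomial in $\mathbb{F}_q[X]$ of degree at most $D_U \cdot k$. -/

import Mathlib

open Polynomial Matrix Module Submodule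

lemma aux_degree_det_le {F : Type} [Field F] {n d : ℕ}
    (P : Matrix (Fin n) (Fin n) (Polynomial F))
    (h : ∀ i j, (P i j).degree ≤ (d : ℕ)) : P.det.degree ≤ ((n * d : ℕ) : WithBot ℕ) := by
  rw [Matrix.det_apply]
  refine (Polynomial.degree_sum_le _ _).trans ?_
  refine Finset.sup_le fun σ _ => ?_
  have h1 : (Equiv.Perm.sign σ • ∏ i, P (σ i) i).degree = (∏ i, P (σ i) i).degree := by
    rcases Int.units_eq_one_or (Equiv.Perm.sign σ) with hs | hs <;> rw [hs] <;>
      simp [Units.smul_def]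
  rw [h1]
  refine (Polynomial.degree_prod_le _ _).trans ?_
  have h2 : ∑ i : Fin n, (P (σ i) i).degree ≤ ∑ _i : Fin n, (d : WithBot ℕ) :=
    Finset.sum_le_sum fun i _ => h _ _
  refine h2.trans ?_
  rw [Finset.sum_const, Finset.card_univ, Fintype.card_fin]
  have : ((n * d : ℕ) : WithBot ℕ) = n • ((d : ℕ) : WithBot ℕ) := by
    rw [← smul_eq_mul]
    exact map_nsmul (Nat.castAddMonoidHom (WithBot ℕ)) n d
  rw [this]

lemma aux_det_poly {F : Type} [Field F] {n d : ℕ}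
    (B : Matrix (Fin n) (Fin n) (RatFunc F))
    (hB : ∀ i j, ∃ p : Polynomial F, p.degree ≤ (d : ℕ) ∧
      B i j = algebraMap (Polynomial F) (RatFunc F) p) :
    ∃ p : Polynomial F, p.degree ≤ ((n * d : ℕ) : WithBot ℕ) ∧
      B.det = algebraMap (Polynomial F) (RatFunc F) p := by
  choose P hdeg hP using hB
  refine ⟨(Matrix.of P).det, aux_degree_det_le _ hdeg, ?_⟩
  have hBe : B = (algebraMap (Polynomial F) (RatFunc F)).mapMatrix (Matrix.of P) := by
    ext i j; simpa using hP i j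
  rw [hBe]
  exact (RingHom.map_det _ _).symm

theorem stmt8 (F : Type) [Field F] [Fintype F] (b k DU : ℕ)
    (U : Submodule (RatFunc F) (Fin b → RatFunc F))
    (hDU : Module.finrank (RatFunc F) ↥U = DU)
    (hspan : ∃ T : Set (Fin b → RatFunc F), Submodule.span (RatFunc F) T = U ∧
      ∀ v ∈ T, ∀ i, ∃ p : Polynomial F, p.degree ≤ (k : ℕ) ∧
        v i = algebraMap (Polynomial F) (RatFunc F) p) :
    ∃ Z : Matrix (Fin (b - DU)) (Fin b) (RatFunc F),
      LinearMap.ker Z.mulVecLin = U ∧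
      ∀ i j, ∃ p : Polynomial F, p.degree ≤ (DU * k : ℕ) ∧
        Z i j = algebraMap (Polynomial F) (RatFunc F) p := by
  classical
  obtain ⟨T, hTspan, hT⟩ := hspan
  obtain ⟨s, hsT, hs_span, hs_li⟩ := exists_linearIndependent (RatFunc F) T
  rw [hTspan] at hs_span
  have hfin : s.Finite := hs_li.setFinite
  haveI := hfin.fintype
  have hcard : Fintype.card s = DU := by
    have h1 := finrank_span_set_eq_card hs_li
    rw [hs_span, hDU] at h1
    rw [← Set.toFinset_card, ← h1]
  let e1 : Fin DU ≃ s := (Fintype.equivFinOfCardEq hcard).symm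
  let M : Matrix (Fin DU) (Fin b) (RatFunc F) :=
    Matrix.of fun i j => (e1 i : Fin b → RatFunc F) j
  have hMrow : ∀ i, M i = (e1 i : Fin b → RatFunc F) := fun i => rfl
  have hMentry : ∀ i c, ∃ p : Polynomial F, p.degree ≤ (k : ℕ) ∧
      M i c = algebraMap (Polynomial F) (RatFunc F) p :=
    fun i c => hT _ (hsT (e1 i).2) c
  have hMli : LinearIndependent (RatFunc F) (fun i => M i) := hs_li.comp e1 e1.injective
  have hDUb : DU ≤ b := by
    rw [← hDU]
    simpa [Module.finrank_fin_fun] using U.finrank_le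
  -- columns of M span everything
  have hcolspan : Submodule.span (RatFunc F) (Set.range Mᵀ) = ⊤ := by
    apply Submodule.eq_top_of_finrank_eq
    have hrk : finrank (RatFunc F) (Submodule.span (RatFunc F) (Set.range Mᵀ)) = M.rank := by
      rw [Matrix.rank, Matrix.range_mulVecLin]; rfl
    rw [hrk, ← Matrix.rank_transpose, Module.finrank_fin_fun]
    have hker : LinearMap.ker Mᵀ.mulVecLin = ⊥ := by
      rw [LinearMap.ker_eq_bot, Matrix.coe_mulVecLin, Matrix.mulVec_injective_iff]
      exact hMli
    have h2 := LinearMap.finrank_range_add_finrank_ker Mᵀ.mulVecLin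
    rw [hker, finrank_bot, add_zero, Module.finrank_fin_fun] at h2
    exact h2
  obtain ⟨s', hs'sub, hs'span, hs'li⟩ := exists_linearIndependent (RatFunc F) (Set.range Mᵀ)
  rw [hcolspan] at hs'span
  have hfin' : s'.Finite := hs'li.setFinite
  haveI := hfin'.fintype
  have hcard' : Fintype.card s' = DU := by
    have h1 := finrank_span_set_eq_card hs'li
    rw [hs'span, finrank_top, Module.finrank_fin_fun] at h1
    rw [← Set.toFinset_card, ← h1]
  let e2 : Fin DU ≃ s' := (Fintype.equivFinOfCardEq hcard').symm
  have hpick : ∀ v : s', ∃ j, Mᵀ j = (v : Fin DU → RatFunc F) := fun v => hs'sub v.2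
  choose jf hjf using hpick
  let g : Fin DU → Fin b := fun t => jf (e2 t)
  have hg : ∀ t, Mᵀ (g t) = (e2 t : Fin DU → RatFunc F) := fun t => hjf (e2 t)
  have hginj : Function.Injective g := by
    intro t1 t2 h
    apply e2.injective
    exact Subtype.ext (by rw [← hg, ← hg, h])
  let A : Matrix (Fin DU) (Fin DU) (RatFunc F) := M.submatrix id g
  have hAentry : ∀ i t, ∃ p : Polynomial F, p.degree ≤ (k : ℕ) ∧
      A i t = algebraMap (Polynomial F) (RatFunc F) p := fun i t => hMentry i (g t)
  have hAdet : A.det ≠ 0 := by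
    have hAcols : LinearIndependent (RatFunc F) (fun t => Aᵀ t) := by
      have he : (fun t => Aᵀ t) = fun t => (e2 t : Fin DU → RatFunc F) := by
        funext t
        rw [← hg t]
        rfl
      rw [he]
      exact hs'li.comp e2 e2.injective
    exact ((Matrix.isUnit_iff_isUnit_det A).mp
      (Matrix.linearIndependent_cols_iff_isUnit.mp hAcols)).ne_zero
  -- complement of the chosen columns
  let S : Finset (Fin b) := Finset.image g Finset.univ
  have hScard : S.card = DU := by
    rw [Finset.card_image_of_injective _ hginj, Finset.card_univ, Fintype.card_fin]
  have hSc : Sᶜ.card = b - DU := by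
    rw [Finset.card_compl, hScard, Fintype.card_fin]
  let e0 := Sᶜ.orderIsoOfFin hSc
  let e : Fin (b - DU) → Fin b := fun r => (e0 r : Fin b)
  have heinj : Function.Injective e := fun r1 r2 h => e0.injective (Subtype.ext h)
  have heS : ∀ r, e r ∉ S := fun r => Finset.mem_compl.mp (e0 r).2
  have heg : ∀ r t, e r ≠ g t := by
    intro r t h
    exact heS r (h ▸ Finset.mem_image_of_mem g (Finset.mem_univ t))
  -- the matrix Z
  let w : Fin (b - DU) → Fin DU → RatFunc F := fun r => Matrix.cramer A (fun i => M i (e r))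
  let Z : Matrix (Fin (b - DU)) (Fin b) (RatFunc F) := Matrix.of fun r c =>
    (if c = e r then A.det else 0) - ∑ t, (if c = g t then w r t else 0)
  -- key computation : every row of Z is orthogonal to every row of M
  have hZM : ∀ r i, ∑ c, M i c * Z r c = 0 := by
    intro r i
    have hsplit : ∀ c, M i c * Z r c =
        (if c = e r then M i c * A.det else 0) -
          ∑ t, (if c = g t then M i c * w r t else 0) := by
      intro c
      simp only [Z, Matrix.of_apply, mul_sub, Finset.mul_sum, mul_ite, mul_zero]
    rw [Finset.sum_congr rfl fun c _ => hsplit c, Finset.sum_sub_distrib,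
      Finset.sum_ite_eq' Finset.univ (e r) (fun c => M i c * A.det), if_pos (Finset.mem_univ _),
      Finset.sum_comm]
    have hinner : ∀ t, (∑ c, if c = g t then M i c * w r t else 0) = M i (g t) * w r t := by
      intro t
      rw [Finset.sum_ite_eq' Finset.univ (g t) (fun c => M i c * w r t),
        if_pos (Finset.mem_univ _)]
    rw [Finset.sum_congr rfl fun t _ => hinner t]
    have hAv : (∑ t, M i (g t) * w r t) = (A *ᵥ (w r)) i := by
      simp [A, Matrix.mulVec, dotProduct, Matrix.submatrix_apply]
    rw [hAv, Matrix.mulVec_cramer A (fun i => M i (e r))]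
    simp [mul_comm]
  -- U is contained in the kernel
  have hUle : U ≤ LinearMap.ker Z.mulVecLin := by
    rw [← hs_span, Submodule.span_le]
    intro v hv
    simp only [SetLike.mem_coe, LinearMap.mem_ker, Matrix.mulVecLin_apply]
    have hv' : M (e1.symm ⟨v, hv⟩) = v := by rw [hMrow]; simp
    funext r
    rw [← hv']
    show ∑ c, Z r c * M (e1.symm ⟨v, hv⟩) c = 0
    rw [Finset.sum_congr rfl fun c _ => mul_comm (Z r c) _]
    exact hZM r _
  -- value of rows of Z on the complementary coordinates
  have hzval : ∀ r r0, Z r (e r0) = if r = r0 then A.det else 0 := by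
    intro r r0
    have hsum0 : (∑ t, if e r0 = g t then w r t else 0) = 0 :=
      Finset.sum_eq_zero fun t _ => if_neg (heg r0 t)
    show (if e r0 = e r then A.det else 0) - _ = _
    rw [hsum0, sub_zero]
    by_cases h : r = r0
    · subst h; rw [if_pos rfl, if_pos rfl]
    · rw [if_neg (fun hh => h (heinj hh).symm), if_neg h]
  -- rows of Z are linearly independent
  have hZli : LinearIndependent (RatFunc F) (fun r => Z r) := by
    rw [Fintype.linearIndependent_iff]
    intro cc hcc r0
    have h0 := congrFun hcc (e r0)
    set_option synthInstance.maxHeartbeats 1000000 in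
    simp only [Finset.sum_apply, Pi.smul_apply, smul_eq_mul, Pi.zero_apply] at h0
    rw [Finset.sum_congr rfl (fun r _ => by rw [hzval r r0, mul_ite, mul_zero]),
      Finset.sum_ite_eq' Finset.univ r0 (fun r => cc r * A.det),
      if_pos (Finset.mem_univ _)] at h0
    exact (mul_eq_zero.mp h0).resolve_right hAdet
  -- dimension of kernel
  have hkerD : finrank (RatFunc F) (LinearMap.ker Z.mulVecLin) = DU := by
    have hker : LinearMap.ker Zᵀ.mulVecLin = ⊥ := by
      rw [LinearMap.ker_eq_bot, Matrix.coe_mulVecLin, Matrix.mulVec_injective_iff]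
      exact hZli
    have h2 := LinearMap.finrank_range_add_finrank_ker Zᵀ.mulVecLin
    rw [hker, finrank_bot, add_zero, Module.finrank_fin_fun] at h2
    have hZrank : finrank (RatFunc F) (LinearMap.range Z.mulVecLin) = b - DU := by
      have : finrank (RatFunc F) (LinearMap.range Z.mulVecLin) = Z.rank := rfl
      rw [this, ← Matrix.rank_transpose]
      exact h2
    have h3 := LinearMap.finrank_range_add_finrank_ker Z.mulVecLin
    rw [hZrank, Module.finrank_fin_fun] at h3
    omega
  refine ⟨Z, ?_, ?_⟩
  · exact (Submodule.eq_of_le_of_finrank_le hUle (by rw [hkerD, hDU])).symm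
  · intro r c
    by_cases h1 : c = e r
    · obtain ⟨p, hp, hpe⟩ := aux_det_poly A hAentry
      refine ⟨p, hp, ?_⟩
      have hz : Z r c = A.det := by
        subst h1
        have := hzval r r
        rw [if_pos rfl] at this
        exact this
      rw [hz, hpe]
    · by_cases h2 : ∃ t, c = g t
      · obtain ⟨t0, rfl⟩ := h2
        have hz : Z r (g t0) = - w r t0 := by
          show (if g t0 = e r then A.det else 0) - _ = _
          rw [if_neg (fun hh => heg r t0 hh.symm),
            Finset.sum_congr rfl (fun t _ =>
              (show (if g t0 = g t then w r t else 0) = (if t = t0 then w r t else 0) by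
                by_cases h : t = t0
                · subst h; rw [if_pos rfl, if_pos rfl]
                · rw [if_neg (fun hh => h (hginj hh).symm), if_neg h])),
            Finset.sum_ite_eq' Finset.univ t0 (fun t => w r t), if_pos (Finset.mem_univ _)]
          ring
        have hent : ∀ i t, ∃ p : Polynomial F, p.degree ≤ (k : ℕ) ∧
            (A.updateCol t0 (fun i => M i (e r))) i t
              = algebraMap (Polynomial F) (RatFunc F) p := by
          intro i t
          rw [Matrix.updateCol_apply]
          by_cases h : t = t0
          · rw [if_pos h]; exact hMentry i (e r)
          · rw [if_neg h]; exact hAentry i t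
        obtain ⟨p, hp, hpe⟩ := aux_det_poly _ hent
        refine ⟨-p, by simpa using hp, ?_⟩
        rw [hz, show w r t0 = (A.updateCol t0 (fun i => M i (e r))).det from
          Matrix.cramer_apply _ _ _, hpe, map_neg]
      · refine ⟨0, by simp, ?_⟩
        have hz : Z r c = 0 := by
          show (if c = e r then A.det else 0) - _ = _
          rw [if_neg h1, Finset.sum_eq_zero (fun t _ => if_neg (fun hh => h2 ⟨t, hh⟩)),
            sub_zero]
        rw [hz, map_zero]
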